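/- Let C be a nonempty closed convex subset of a real Hilbert space H, let ε > 0, let β > 0, let ψ : ℝ → ℝ be even, convex, and differentiable with a β-Lipschitzian derivative, and set h = ψ ∘ max(d_C − ε, 0). Let γ > 0 and x ∈ H. Then prox_{γh} x = proj_C x + ((ε + prox_{γψ}(d_C(x) − ε))/d_C(x)) (x − proj_C x) if d_C(x) > ε, and prox_{γh} x = x if d_C(x) ≤ ε. -/

import Mathlib

open Metric

/-- An even convex function is monotone on `[0,∞)`. -/
lemma psi_mono_aux (ψ : ℝ → ℝ) (heven : ∀ t, ψ (-t) = ψ t)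
    (hconv : ConvexOn ℝ Set.univ ψ) {s t : ℝ} (hs : 0 ≤ s) (hst : s ≤ t) :
    ψ s ≤ ψ t := by
  rcases eq_or_lt_of_le (hs.trans hst) with ht | ht
  · have : s = t := le_antisymm hst (by linarith [ht.symm ▸ hs])
    rw [this]
  · have ha : (0:ℝ) ≤ (t - s) / (2 * t) := div_nonneg (by linarith) (by linarith)
    have hb : (0:ℝ) ≤ (t + s) / (2 * t) := div_nonneg (by linarith) (by linarith)
    have hab : (t - s) / (2 * t) + (t + s) / (2 * t) = 1 := by
      field_simp; ring
    have := hconv.2 (Set.mem_univ (-t)) (Set.mem_univ t) ha hb hab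
    simp only [smul_eq_mul, heven] at this
    have harg : (t - s) / (2 * t) * (-t) + (t + s) / (2 * t) * t = s := by
      field_simp; ring
    rw [harg] at this
    calc ψ s ≤ (t - s) / (2 * t) * ψ t + (t + s) / (2 * t) * ψ t := this
      _ = ψ t := by field_simp; ring

/-- `ψ 0` is the minimum of an even convex function. -/
lemma psi_zero_le_aux (ψ : ℝ → ℝ) (heven : ∀ t, ψ (-t) = ψ t)
    (hconv : ConvexOn ℝ Set.univ ψ) (r : ℝ) : ψ 0 ≤ ψ r := by
  have := hconv.2 (Set.mem_univ (-r)) (Set.mem_univ r)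
    (by norm_num : (0:ℝ) ≤ 1/2) (by norm_num : (0:ℝ) ≤ 1/2) (by norm_num)
  simp only [smul_eq_mul, heven] at this
  have harg : (1:ℝ)/2 * (-r) + 1/2 * r = 0 := by ring
  rw [harg] at this
  linarith

/-- Midpoint convexity of the distance function to a convex set. -/
lemma infDist_midpoint_aux {H : Type*} [NormedAddCommGroup H] [InnerProductSpace ℝ H]
    (C : Set H) (hCne : C.Nonempty) (hCconv : Convex ℝ C) (u v : H) :
    infDist ((1/2 : ℝ) • (u + v)) C ≤ (infDist u C + infDist v C) / 2 := by
  by_contra hcon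
  push_neg at hcon
  set δ := (infDist ((1/2 : ℝ) • (u + v)) C - (infDist u C + infDist v C) / 2) / 2 with hδdef
  have hδ : 0 < δ := by simp only [hδdef]; linarith
  obtain ⟨cu, hcu, hdu⟩ := (infDist_lt_iff hCne).1
    (show infDist u C < infDist u C + δ by linarith)
  obtain ⟨cv, hcv, hdv⟩ := (infDist_lt_iff hCne).1
    (show infDist v C < infDist v C + δ by linarith)
  have hcm : (1/2 : ℝ) • cu + (1/2 : ℝ) • cv ∈ C :=
    hCconv hcu hcv (by norm_num) (by norm_num) (by norm_num)
  have h1 : infDist ((1/2 : ℝ) • (u + v)) C ≤ dist ((1/2 : ℝ) • (u + v))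
      ((1/2 : ℝ) • cu + (1/2 : ℝ) • cv) := infDist_le_dist_of_mem hcm
  have h2 : dist ((1/2 : ℝ) • (u + v)) ((1/2 : ℝ) • cu + (1/2 : ℝ) • cv)
      ≤ (dist u cu + dist v cv) / 2 := by
    rw [dist_eq_norm, dist_eq_norm, dist_eq_norm]
    have heq : (1/2 : ℝ) • (u + v) - ((1/2 : ℝ) • cu + (1/2 : ℝ) • cv)
        = (1/2 : ℝ) • ((u - cu) + (v - cv)) := by module
    rw [heq, norm_smul]
    have := norm_add_le (u - cu) (v - cv)
    simp only [Real.norm_eq_abs]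
    rw [abs_of_pos (by norm_num : (0:ℝ) < 1/2)]
    linarith
  linarith


/-- With `C` nonempty closed convex, `ε > 0`, `ψ : ℝ → ℝ` even convex
differentiable with `β`-Lipschitzian derivative, `h = ψ ∘ max(d_C − ε, 0)`, `γ > 0` and
`x ∈ H`:  `prox_{γh} x = proj_C x + ((ε + prox_{γψ}(d_C x − ε))/d_C x) • (x − proj_C x)`
if `d_C x > ε`, and `prox_{γh} x = x` if `d_C x ≤ ε`. -/
theorem stmt_6 {H : Type*} [NormedAddCommGroup H] [InnerProductSpace ℝ H] [CompleteSpace H]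
    (C : Set H) (hCne : C.Nonempty) (hCclosed : IsClosed C) (hCconv : Convex ℝ C)
    (ε : ℝ) (hε : 0 < ε) (β : ℝ) (hβ : 0 < β)
    (ψ : ℝ → ℝ) (heven : ∀ t, ψ (-t) = ψ t) (hconv : ConvexOn ℝ Set.univ ψ)
    (ψ' : ℝ → ℝ) (hderiv : ∀ t, HasDerivAt ψ (ψ' t) t)
    (hlip : LipschitzWith (Real.toNNReal β) ψ')
    (h : H → ℝ) (hdef : ∀ x, h x = ψ (max (Metric.infDist x C - ε) 0))
    (projC : H → H)
    (hproj : ∀ x, projC x ∈ C ∧ ∀ y ∈ C, dist x (projC x) ≤ dist x y)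
    (γ : ℝ) (hγ : 0 < γ) (x : H)
    -- `q = prox_{γψ}(d_C x − ε)` :
    (q : ℝ)
    (hq : ∀ t : ℝ, γ * ψ q + ((Metric.infDist x C - ε) - q) ^ 2 / 2
      ≤ γ * ψ t + ((Metric.infDist x C - ε) - t) ^ 2 / 2)
    -- `p = prox_{γh} x` :
    (p : H)
    (hp : ∀ y : H, γ * h p + ‖x - p‖ ^ 2 / 2 ≤ γ * h y + ‖x - y‖ ^ 2 / 2) :
    (ε < Metric.infDist x C →
      p = projC x + ((ε + q) / Metric.infDist x C) • (x - projC x)) ∧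
    (Metric.infDist x C ≤ ε → p = x) := by
  -- Uniqueness: any other minimizer of `y ↦ γ h y + ‖x−y‖²/2` equals `p`.
  have key : ∀ z : H, (∀ y : H, γ * h z + ‖x - z‖ ^ 2 / 2 ≤ γ * h y + ‖x - y‖ ^ 2 / 2) →
      p = z := by
    intro z hz
    set m := (1/2 : ℝ) • (p + z) with hm
    -- midpoint convexity of h
    have hmid : h m ≤ (h p + h z) / 2 := by
      rw [hdef m, hdef p, hdef z]
      have h1 := infDist_midpoint_aux C hCne hCconv p z
      have hgm : max (Metric.infDist m C - ε) 0
          ≤ (max (Metric.infDist p C - ε) 0 + max (Metric.infDist z C - ε) 0) / 2 := by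
        apply max_le
        · have := le_max_left (Metric.infDist p C - ε) 0
          have := le_max_left (Metric.infDist z C - ε) 0
          linarith
        · have := le_max_right (Metric.infDist p C - ε) 0
          have := le_max_right (Metric.infDist z C - ε) 0
          linarith
      have h2 : ψ (max (Metric.infDist m C - ε) 0)
          ≤ ψ ((max (Metric.infDist p C - ε) 0 + max (Metric.infDist z C - ε) 0) / 2) :=
        psi_mono_aux ψ heven hconv (le_max_right _ _) hgm
      have h3 := hconv.2 (Set.mem_univ (max (Metric.infDist p C - ε) 0))
        (Set.mem_univ (max (Metric.infDist z C - ε) 0))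
        (by norm_num : (0:ℝ) ≤ 1/2) (by norm_num : (0:ℝ) ≤ 1/2) (by norm_num)
      simp only [smul_eq_mul] at h3
      have harg : (1:ℝ)/2 * max (Metric.infDist p C - ε) 0
          + 1/2 * max (Metric.infDist z C - ε) 0
          = (max (Metric.infDist p C - ε) 0 + max (Metric.infDist z C - ε) 0) / 2 := by ring
      rw [harg] at h3
      linarith
    -- parallelogram identity
    have hpar : ‖x - m‖ ^ 2 = (‖x - p‖ ^ 2 + ‖x - z‖ ^ 2) / 2 - ‖z - p‖ ^ 2 / 4 := by
      have heq : x - m = (1/2 : ℝ) • ((x - p) + (x - z)) := by rw [hm]; module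
      have heq2 : (x - p) - (x - z) = z - p := by abel
      have e1 := norm_add_sq_real (x - p) (x - z)
      have e2 := norm_sub_sq_real (x - p) (x - z)
      rw [heq2] at e2
      rw [heq, norm_smul]
      simp only [Real.norm_eq_abs]
      rw [abs_of_pos (by norm_num : (0:ℝ) < 1/2)]
      nlinarith [e1, e2]
    have h4 := hp m
    have h5 := hz p
    have h6 := hp z
    have h7 : γ * h m ≤ γ * ((h p + h z) / 2) := mul_le_mul_of_nonneg_left hmid hγ.le
    have h8 : ‖z - p‖ ^ 2 ≤ 0 := by nlinarith
    have h9 : z - p = 0 := by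
      have := sq_nonneg ‖z - p‖
      have : ‖z - p‖ ^ 2 = 0 := le_antisymm h8 this
      have := pow_eq_zero_iff (n := 2) (by norm_num) |>.mp this
      exact norm_eq_zero.mp this
    have := sub_eq_zero.mp h9
    rw [this]
  -- basic facts about the projection
  obtain ⟨hPC, hPmin⟩ := hproj x
  have hdP : Metric.infDist x C = dist x (projC x) := by
    refine le_antisymm (Metric.infDist_le_dist_of_mem hPC) ?_
    by_contra hcon
    push_neg at hcon
    obtain ⟨y, hyC, hy⟩ := (Metric.infDist_lt_iff hCne).1 hcon
    exact absurd (hPmin y hyC) (not_le.mpr hy)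
  constructor
  · -- case d_C x > ε
    intro hlt
    set d := Metric.infDist x C with hd
    set D := d - ε with hD
    clear_value D d
    have hDpos : 0 < D := by rw [hD]; linarith
    -- q ≥ 0
    have hq0 : 0 ≤ q := by
      by_contra hcon
      push_neg at hcon
      have := hq (-q)
      rw [heven q] at this
      nlinarith
    -- q ≤ D
    have hqD : q ≤ D := by
      by_contra hcon
      push_neg at hcon
      have hmono : ψ D ≤ ψ q := psi_mono_aux ψ heven hconv hDpos.le hcon.le
      have := hq D
      nlinarith
    set z := projC x + ((ε + q) / d) • (x - projC x) with hzdef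
    have hdpos : 0 < d := lt_trans hε hlt
    have hnormxP : ‖x - projC x‖ = d := by rw [hdP, dist_eq_norm]
    have hlamnn : 0 ≤ (ε + q) / d := div_nonneg (by linarith) hdpos.le
    -- ‖z − projC x‖ = ε + q
    have hzP : ‖z - projC x‖ = ε + q := by
      have : z - projC x = ((ε + q) / d) • (x - projC x) := by rw [hzdef]; abel
      rw [this, norm_smul, Real.norm_eq_abs, abs_of_nonneg hlamnn, hnormxP]
      field_simp
    -- ‖x − z‖ = D − q
    have hxz : ‖x - z‖ = D - q := by
      have : x - z = (1 - (ε + q) / d) • (x - projC x) := by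
        rw [hzdef, sub_smul, one_smul]; abel
      rw [this, norm_smul, Real.norm_eq_abs]
      have h1 : (ε + q) / d ≤ 1 := by
        rw [div_le_one hdpos]; simp only [hD] at hqD; linarith
      rw [abs_of_nonneg (by linarith), hnormxP]
      field_simp [hD]
      rw [hD]; ring
    -- infDist z C = ε + q
    have hdz : Metric.infDist z C = ε + q := by
      refine le_antisymm ?_ ?_
      · have := Metric.infDist_le_dist_of_mem (x := z) hPC
        rwa [dist_eq_norm, hzP] at this
      · have h1 := Metric.infDist_le_infDist_add_dist (x := x) (y := z) (s := C)
        rw [dist_eq_norm, hxz, ← hd] at h1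
        rw [hD] at h1
        linarith
    have hhz : h z = ψ q := by
      rw [hdef z, hdz]
      congr 1
      simp only [add_sub_cancel_left]
      exact max_eq_left hq0
    refine key z ?_
    intro y
    set t := Metric.infDist y C with ht
    clear_value t
    have hty : h y = ψ (max (t - ε) 0) := by rw [hdef y, ← ht]
    have l1 : d ≤ t + ‖x - y‖ := by
      have := Metric.infDist_le_infDist_add_dist (x := x) (y := y) (s := C)
      rwa [dist_eq_norm, ← hd, ← ht] at this
    have l2 : t ≤ d + ‖x - y‖ := by
      have := Metric.infDist_le_infDist_add_dist (x := y) (y := x) (s := C)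
      rwa [dist_eq_norm', ← hd, ← ht] at this
    have hsq : (D - max (t - ε) 0) ^ 2 ≤ ‖x - y‖ ^ 2 := by
      rcases le_or_gt ε t with hc | hc
      · rw [max_eq_left (by linarith)]
        have heq : D - (t - ε) = d - t := by rw [hD]; ring
        rw [heq]
        apply sq_le_sq' <;> linarith
      · rw [max_eq_right (by linarith)]
        have hnn : (0:ℝ) ≤ ‖x - y‖ := norm_nonneg _
        have hDd : D = d - ε := hD
        apply sq_le_sq' <;> linarith
    have hfin := hq (max (t - ε) 0)
    have hfin2 : γ * ψ (max (t - ε) 0) + (D - max (t - ε) 0) ^ 2 / 2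
        ≤ γ * ψ (max (t - ε) 0) + ‖x - y‖ ^ 2 / 2 := by linarith [hsq]
    rw [hhz, hty, hxz]
    linarith [hfin, hfin2]
  · -- case d_C x ≤ ε
    intro hle
    refine key x ?_
    intro y
    have hhx : h x = ψ 0 := by
      rw [hdef x]
      congr 1
      exact max_eq_right (by linarith)
    have hhy : ψ 0 ≤ h y := by rw [hdef y]; exact psi_zero_le_aux ψ heven hconv _
    have h1 : γ * h x ≤ γ * h y := by
      rw [hhx]; exact mul_le_mul_of_nonneg_left hhy hγ.le
    have h2 : (0:ℝ) ≤ ‖x - y‖ ^ 2 := sq_nonneg _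
    simp only [sub_self, norm_zero]
    nlinarith
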